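/- Let P be an edge-ordered path with at least two edges. If P is a monotone path or a flipped path, then ex_<(n, P) = Θ(n): there exist constants c, C > 0 such that c·n ≤ ex_<(n, P) ≤ C·n for all sufficiently large n. -/

import Mathlib

set_option maxHeartbeats 1000000

/-- An edge-ordered graph: a finite simple graph together with an injective
real labeling of its edges (inducing a linear order on the edge set). -/
structure EOGraph (V : Type) [Fintype V] where
  graph : SimpleGraph V
  label : Sym2 V → ℝ
  inj : ∀ e ∈ graph.edgeSet, ∀ f ∈ graph.edgeSet, label e = label f → e = f

/-- `G` contains `H`: an injective, adjacency-preserving, edge-order-respecting map. -/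
def EOContains {V W : Type} [Fintype V] [Fintype W] (G : EOGraph V) (H : EOGraph W) : Prop :=
  ∃ f : W → V, Function.Injective f ∧
    (∀ a b, H.graph.Adj a b → G.graph.Adj (f a) (f b)) ∧
    ∀ e ∈ H.graph.edgeSet, ∀ e' ∈ H.graph.edgeSet,
      H.label e < H.label e' → G.label (Sym2.map f e) < G.label (Sym2.map f e')

/-- The Turán number `ex_<(n, H)`: the maximum number of edges of an
edge-ordered graph on `n` vertices avoiding `H`. -/
noncomputable def exLT {W : Type} [Fintype W] (n : ℕ) (H : EOGraph W) : ℕ :=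
  sSup {m | ∃ G : EOGraph (Fin n), ¬ EOContains G H ∧ G.graph.edgeSet.ncard = m}

/-- The reverse of an edge-ordered graph: same graph, reversed edge order. -/
def EOGraph.reverse {V : Type} [Fintype V] (G : EOGraph V) : EOGraph V where
  graph := G.graph
  label := fun e => - G.label e
  inj := fun e he f hf h => G.inj e he f hf (neg_inj.mp h)

/-- Two edges (as elements of `Sym2 V`) are adjacent if they share a vertex. -/
def EdgesAdjacent {V : Type} (e f : Sym2 V) : Prop := ∃ v, v ∈ e ∧ v ∈ f

/-- `e` and `f` are consecutive edges of `G`: `e < f` with no edge strictly in between. -/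
def Consecutive {V : Type} [Fintype V] (G : EOGraph V) (e f : Sym2 V) : Prop :=
  e ∈ G.graph.edgeSet ∧ f ∈ G.graph.edgeSet ∧ G.label e < G.label f ∧
    ¬ ∃ g ∈ G.graph.edgeSet, G.label e < G.label g ∧ G.label g < G.label f

/-- A semi-caterpillar: the underlying graph is a tree with at least one edge, and any
pair of consecutive edges is adjacent or directly connected by an edge larger than both. -/
def IsSemiCaterpillar {V : Type} [Fintype V] (G : EOGraph V) : Prop :=
  G.graph.IsTree ∧ G.graph.edgeSet.Nonempty ∧
  ∀ e f, Consecutive G e f →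
    EdgesAdjacent e f ∨
    ∃ u v, s(u, v) ∈ G.graph.edgeSet ∧ u ∈ e ∧ v ∈ f ∧
      G.label e < G.label s(u, v) ∧ G.label f < G.label s(u, v)

/-- The order chromatic number of `G` is at most `k`: there is a simple graph `H` with
chromatic number at most `k` all of whose edge-orderings contain `G`. -/
def OrderChromAtMost {V : Type} [Fintype V] (G : EOGraph V) (k : ℕ) : Prop :=
  ∃ (m : ℕ) (H : SimpleGraph (Fin m)), H.chromaticNumber ≤ (k : ℕ∞) ∧
    ∀ K : EOGraph (Fin m), K.graph = H → EOContains K G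

/-- The order chromatic number of `G` equals 2. -/
def HasOrderChrom2 {V : Type} [Fintype V] (G : EOGraph V) : Prop :=
  OrderChromAtMost G 2 ∧ ¬ OrderChromAtMost G 1

/-- A vertex is close if the edges incident to it form an interval in the edge order. -/
def CloseVertex {V : Type} [Fintype V] (G : EOGraph V) (v : V) : Prop :=
  ∀ e ∈ G.graph.edgeSet, ∀ f ∈ G.graph.edgeSet, ∀ g ∈ G.graph.edgeSet,
    v ∈ e → v ∈ g → G.label e ≤ G.label f → G.label f ≤ G.label g → v ∈ f

/-- An edge-ordered bigraph: an edge-ordered graph with a proper 2-coloring of the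
vertices into left (`false`) and right (`true`) vertices. -/
structure EOBigraph (V : Type) [Fintype V] where
  toEOGraph : EOGraph V
  side : V → Bool
  proper : ∀ u v, toEOGraph.graph.Adj u v → side u ≠ side v

/-- A right caterpillar: an edge-ordered bigraph whose underlying edge-ordered graph is a
semi-caterpillar and all of whose right vertices are close. -/
def IsRightCaterpillar {V : Type} [Fintype V] (B : EOBigraph V) : Prop :=
  IsSemiCaterpillar B.toEOGraph ∧ ∀ v, B.side v = true → CloseVertex B.toEOGraph v

/-- Containment of edge-ordered bigraphs: additionally sides must be preserved. -/
def BContains {V W : Type} [Fintype V] [Fintype W] (G : EOBigraph V) (H : EOBigraph W) : Prop :=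
  ∃ f : W → V, Function.Injective f ∧
    (∀ a b, H.toEOGraph.graph.Adj a b → G.toEOGraph.graph.Adj (f a) (f b)) ∧
    (∀ e ∈ H.toEOGraph.graph.edgeSet, ∀ e' ∈ H.toEOGraph.graph.edgeSet,
      H.toEOGraph.label e < H.toEOGraph.label e' →
        G.toEOGraph.label (Sym2.map f e) < G.toEOGraph.label (Sym2.map f e')) ∧
    ∀ a, G.side (f a) = H.side a

/-- Isomorphism of edge-ordered bigraphs. -/
def BIsoTo {V W : Type} [Fintype W] [Fintype V] (H : EOBigraph W) (G : EOBigraph V) : Prop :=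
  ∃ f : W ≃ V, (∀ a b, H.toEOGraph.graph.Adj a b ↔ G.toEOGraph.graph.Adj (f a) (f b)) ∧
    (∀ e ∈ H.toEOGraph.graph.edgeSet, ∀ e' ∈ H.toEOGraph.graph.edgeSet,
      (H.toEOGraph.label e < H.toEOGraph.label e' ↔
        G.toEOGraph.label (Sym2.map f e) < G.toEOGraph.label (Sym2.map f e'))) ∧
    ∀ a, G.side (f a) = H.side a

/-- Isomorphism of edge-ordered graphs. -/
def EOIsoTo {V W : Type} [Fintype W] [Fintype V] (H : EOGraph W) (G : EOGraph V) : Prop :=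
  ∃ f : W ≃ V, (∀ a b, H.graph.Adj a b ↔ G.graph.Adj (f a) (f b)) ∧
    ∀ e ∈ H.graph.edgeSet, ∀ e' ∈ H.graph.edgeSet,
      (H.label e < H.label e' ↔ G.label (Sym2.map f e) < G.label (Sym2.map f e'))

/-- The labeling of the path graph on `Fin k` in which the edge `{i, i+1}` gets label `w i`. -/
def pathLabel {k : ℕ} (w : Fin k → ℝ) : Sym2 (Fin k) → ℝ :=
  Sym2.lift ⟨fun i j => w (min i j), fun i j => by simp [min_comm]⟩

lemma pathGraph_edge_form {k : ℕ} {e : Sym2 (Fin k)}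
    (he : e ∈ (SimpleGraph.pathGraph k).edgeSet) :
    ∃ i j : Fin k, e = s(i, j) ∧ (i : ℕ) + 1 = (j : ℕ) := by
  induction e using Sym2.inductionOn with
  | hf a b =>
    rw [SimpleGraph.mem_edgeSet, SimpleGraph.pathGraph_adj] at he
    rcases he with h | h
    · exact ⟨a, b, rfl, h⟩
    · exact ⟨b, a, Sym2.eq_swap, h⟩

/-- The edge-ordered path on `k` vertices whose edge labels, listed along the path,
are `w 0, w 1, …, w (k-2)`. -/
def pathEO (k : ℕ) (w : Fin k → ℝ) (hw : Function.Injective w) : EOGraph (Fin k) where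
  graph := SimpleGraph.pathGraph k
  label := pathLabel w
  inj := by
    intro e he f hf hef
    obtain ⟨i, j, rfl, hij⟩ := pathGraph_edge_form he
    obtain ⟨i', j', rfl, hij'⟩ := pathGraph_edge_form hf
    have h1 : min i j = i := min_eq_left (Fin.le_def.mpr (by omega))
    have h2 : min i' j' = i' := min_eq_left (Fin.le_def.mpr (by omega))
    simp only [pathLabel, Sym2.lift_mk] at hef
    rw [h1, h2] at hef
    have hii : i = i' := hw hef
    have hjj : j = j' := Fin.ext (by omega)
    rw [hii, hjj]

/-- The edge-ordered path with natural-number labels. -/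
def pathEON (k : ℕ) (v : Fin k → ℕ) (hv : Function.Injective v) : EOGraph (Fin k) :=
  pathEO k (fun i => (v i : ℝ)) (fun a b h => hv (Nat.cast_injective h))

/-- The bipartition of the edge-ordered path `pathEON k v hv`; the starting vertex is a
right vertex iff `startRight` holds (right = `true`, left = `false`). -/
def pathEOBig (k : ℕ) (v : Fin k → ℕ) (hv : Function.Injective v) (startRight : Bool) :
    EOBigraph (Fin k) where
  toEOGraph := pathEON k v hv
  side := fun i => if i.val % 2 = 0 then startRight else !startRight
  proper := by
    intro a b hab
    have h : (SimpleGraph.pathGraph k).Adj a b := hab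
    rw [SimpleGraph.pathGraph_adj] at h
    have hpar : (a.val % 2 = 0) ↔ ¬ (b.val % 2 = 0) := by omega
    by_cases ha : a.val % 2 = 0 <;> by_cases hb : b.val % 2 = 0 <;>
      simp_all

def P4_213 : EOGraph (Fin 4) := pathEON 4 ![2,1,3,0] (by decide)
def P5_1342 : EOGraph (Fin 5) := pathEON 5 ![1,3,4,2,0] (by decide)
def P5_1432 : EOGraph (Fin 5) := pathEON 5 ![1,4,3,2,0] (by decide)
def P6_13254 : EOGraph (Fin 6) := pathEON 6 ![1,3,2,5,4,0] (by decide)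
def P6_21354 : EOGraph (Fin 6) := pathEON 6 ![2,1,3,5,4,0] (by decide)
def P6plus_13254 : EOBigraph (Fin 6) := pathEOBig 6 ![1,3,2,5,4,0] (by decide) true
def P6minus_13254 : EOBigraph (Fin 6) := pathEOBig 6 ![1,3,2,5,4,0] (by decide) false
def P5plus_2143 : EOBigraph (Fin 5) := pathEOBig 5 ![2,1,4,3,0] (by decide) true
def P5minus_2143 : EOBigraph (Fin 5) := pathEOBig 5 ![2,1,4,3,0] (by decide) false

/-- `B'` is an extension of `B`: it is obtained by adding new edges, each connecting an end
of the smallest edge `s(x,y)` of `B` to a new degree-1 vertex, all new edges being smaller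
than `s(x,y)`, and all new edges at the left end being smaller than those at the right end. -/
def IsExtensionOf {V' V : Type} [Fintype V'] [Fintype V]
    (B' : EOBigraph V') (B : EOBigraph V) : Prop :=
  ∃ (ι : V → V') (x y : V),
    Function.Injective ι ∧
    B.toEOGraph.graph.Adj x y ∧ B.side x = false ∧ B.side y = true ∧
    (∀ e ∈ B.toEOGraph.graph.edgeSet, B.toEOGraph.label s(x, y) ≤ B.toEOGraph.label e) ∧
    (∀ a b, B.toEOGraph.graph.Adj a b ↔ B'.toEOGraph.graph.Adj (ι a) (ι b)) ∧
    (∀ a, B'.side (ι a) = B.side a) ∧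
    (∀ e ∈ B.toEOGraph.graph.edgeSet, ∀ f ∈ B.toEOGraph.graph.edgeSet,
      (B.toEOGraph.label e < B.toEOGraph.label f ↔
        B'.toEOGraph.label (Sym2.map ι e) < B'.toEOGraph.label (Sym2.map ι f))) ∧
    (∀ w : V', w ∉ Set.range ι →
      (∃! u, B'.toEOGraph.graph.Adj w u) ∧
      (∀ u, B'.toEOGraph.graph.Adj w u → (u = ι x ∨ u = ι y) ∧
        B'.toEOGraph.label s(w, u) < B'.toEOGraph.label s(ι x, ι y))) ∧
    (∀ w w' : V', w ∉ Set.range ι → w' ∉ Set.range ι →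
      B'.toEOGraph.graph.Adj w (ι x) → B'.toEOGraph.graph.Adj w' (ι y) →
      B'.toEOGraph.label s(w, ι x) < B'.toEOGraph.label s(w', ι y))

/-- A bundled edge-ordered bigraph (on some `Fin n`). -/
structure BundledBigraph where
  n : ℕ
  big : EOBigraph (Fin n)

/-- `B` is (isomorphic to) `T₀`, the edge-ordered bigraph with one edge and two vertices. -/
def IsT0 {V : Type} [Fintype V] (B : EOBigraph V) : Prop :=
  Fintype.card V = 2 ∧ ∀ u v : V, u ≠ v → B.toEOGraph.graph.Adj u v

/-- `B` can be obtained (up to isomorphism) from `T₀` by a sequence of `i` extensions. -/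
def ReachedInSteps {V : Type} [Fintype V] (i : ℕ) (B : EOBigraph V) : Prop :=
  ∃ f : ℕ → BundledBigraph, IsT0 (f 0).big ∧ BIsoTo (f i).big B ∧
    ∀ j < i, IsExtensionOf (f (j+1)).big (f j).big

/-- The recursive depth of a right caterpillar: the minimum number of extension steps
needed to obtain it from `T₀`. -/
def HasRecursiveDepth {V : Type} [Fintype V] (B : EOBigraph V) (i : ℕ) : Prop :=
  ReachedInSteps i B ∧ ∀ j < i, ¬ ReachedInSteps j B

/-- An edge `e` (with left end `x` and right end `y`) is `c`-left-leaning: there are `c` edges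
at `x` and `c` edges at `y` with every edge of the latter set larger than every edge of the
former, but smaller than `e`. -/
def LeftLeaning {V : Type} [Fintype V] (c : ℕ) (G : EOBigraph V) (e : Sym2 V) : Prop :=
  ∃ x y : V, e = s(x, y) ∧ e ∈ G.toEOGraph.graph.edgeSet ∧
    G.side x = false ∧ G.side y = true ∧
    ∃ S S' : Finset (Sym2 V), S.card = c ∧ S'.card = c ∧
      (∀ f ∈ S, f ∈ G.toEOGraph.graph.edgeSet ∧ x ∈ f) ∧
      (∀ f ∈ S', f ∈ G.toEOGraph.graph.edgeSet ∧ y ∈ f) ∧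
      (∀ f ∈ S, ∀ f' ∈ S', G.toEOGraph.label f < G.toEOGraph.label f') ∧
      (∀ f' ∈ S', G.toEOGraph.label f' < G.toEOGraph.label e)

/-- An edge `e` (with left end `x` and right end `y`) is `c`-right-leaning. -/
def RightLeaning {V : Type} [Fintype V] (c : ℕ) (G : EOBigraph V) (e : Sym2 V) : Prop :=
  ∃ x y : V, e = s(x, y) ∧ e ∈ G.toEOGraph.graph.edgeSet ∧
    G.side x = false ∧ G.side y = true ∧
    ∃ S S' : Finset (Sym2 V), S.card = c ∧ S'.card = c ∧
      (∀ f ∈ S, f ∈ G.toEOGraph.graph.edgeSet ∧ x ∈ f) ∧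
      (∀ f ∈ S', f ∈ G.toEOGraph.graph.edgeSet ∧ y ∈ f) ∧
      (∀ f' ∈ S', ∀ f ∈ S, G.toEOGraph.label f' < G.toEOGraph.label f) ∧
      (∀ f ∈ S, G.toEOGraph.label f < G.toEOGraph.label e)

/-- The spanning sub-bigraph of `G` consisting of the edges satisfying `P`. -/
def bigraphRestrict {V : Type} [Fintype V] (G : EOBigraph V) (P : Sym2 V → Prop) :
    EOBigraph V where
  toEOGraph :=
    { graph := SimpleGraph.fromEdgeSet {e | e ∈ G.toEOGraph.graph.edgeSet ∧ P e}
      label := G.toEOGraph.label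
      inj := by
        intro e he f hf h
        rw [SimpleGraph.edgeSet_fromEdgeSet] at he hf
        exact G.toEOGraph.inj e he.1.1 f hf.1.1 h }
  side := G.side
  proper := by
    intro u v huv
    rw [SimpleGraph.fromEdgeSet_adj] at huv
    have h1 : s(u, v) ∈ G.toEOGraph.graph.edgeSet := huv.1.1
    exact G.proper u v ((SimpleGraph.mem_edgeSet _).mp h1)

/-- The spanning subgraph of the `c`-left-leaning edges. -/
def leftSub {V : Type} [Fintype V] (c : ℕ) (G : EOBigraph V) : EOBigraph V :=
  bigraphRestrict G (LeftLeaning c G)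

/-- The spanning subgraph of the `c`-right-leaning edges. -/
def rightSub {V : Type} [Fintype V] (c : ℕ) (G : EOBigraph V) : EOBigraph V :=
  bigraphRestrict G (RightLeaning c G)

/-- `G^{c-left}_i`: iteratively keep only `c`-left-leaning edges, `i` times. -/
def leftIter {V : Type} [Fintype V] (c i : ℕ) (G : EOBigraph V) : EOBigraph V :=
  (leftSub c)^[i] G

/-- `G^{c-right}_i`: iteratively keep only `c`-right-leaning edges, `i` times. -/
def rightIter {V : Type} [Fintype V] (c i : ℕ) (G : EOBigraph V) : EOBigraph V :=
  (rightSub c)^[i] G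

/-- The set of labels of edges incident to `v`. -/
def incidentLabels {V : Type} [Fintype V] (G : EOGraph V) (v : V) : Set ℝ :=
  G.label '' {e | e ∈ G.graph.edgeSet ∧ v ∈ e}

/-- The vertex label `l(v)`: the second smallest label among the edges incident to `v`
(meaningful when `v` has degree at least 2). -/
noncomputable def secondLabel {V : Type} [Fintype V] (G : EOGraph V) (v : V) : ℝ :=
  sInf (incidentLabels G v \ {sInf (incidentLabels G v)})

/-- `v` has degree at least 2. -/
def DegTwo {V : Type} [Fintype V] (G : EOGraph V) (v : V) : Prop :=
  2 ≤ {e | e ∈ G.graph.edgeSet ∧ v ∈ e}.ncard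

/-- An edge `xy` (left end `x`, right end `y`) is left inclined if `l(x) < l(y) ≤ L(xy)`. -/
def LeftInclined {V : Type} [Fintype V] (G : EOBigraph V) (e : Sym2 V) : Prop :=
  ∃ x y : V, e = s(x, y) ∧ e ∈ G.toEOGraph.graph.edgeSet ∧
    G.side x = false ∧ G.side y = true ∧
    DegTwo G.toEOGraph x ∧ DegTwo G.toEOGraph y ∧
    secondLabel G.toEOGraph x < secondLabel G.toEOGraph y ∧
    secondLabel G.toEOGraph y ≤ G.toEOGraph.label e

/-- An edge `xy` (left end `x`, right end `y`) is right inclined if `l(y) < l(x) ≤ L(xy)`. -/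
def RightInclined {V : Type} [Fintype V] (G : EOBigraph V) (e : Sym2 V) : Prop :=
  ∃ x y : V, e = s(x, y) ∧ e ∈ G.toEOGraph.graph.edgeSet ∧
    G.side x = false ∧ G.side y = true ∧
    DegTwo G.toEOGraph x ∧ DegTwo G.toEOGraph y ∧
    secondLabel G.toEOGraph y < secondLabel G.toEOGraph x ∧
    secondLabel G.toEOGraph x ≤ G.toEOGraph.label e

/-- `G_l`: the spanning sub-bigraph of the left inclined edges of `G`. -/
def inclinedLeftSub {V : Type} [Fintype V] (G : EOBigraph V) : EOBigraph V :=
  bigraphRestrict G (LeftInclined G)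

/-- `G_r`: the spanning sub-bigraph of the right inclined edges of `G`. -/
def inclinedRightSub {V : Type} [Fintype V] (G : EOBigraph V) : EOBigraph V :=
  bigraphRestrict G (RightInclined G)

/-- The underlying simple graph of `P` is a path. -/
def IsPathEO {V : Type} [Fintype V] (P : EOGraph V) : Prop :=
  ∃ (k : ℕ) (f : V ≃ Fin k), ∀ a b, P.graph.Adj a b ↔ (SimpleGraph.pathGraph k).Adj (f a) (f b)

/-- A monotone path: the labels increase (or decrease) monotonically along the path. -/
def IsMonotonePath {V : Type} [Fintype V] (P : EOGraph V) : Prop :=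
  ∃ (k : ℕ) (w : Fin k → ℝ) (hw : Function.Injective w),
    (StrictMono w ∨ StrictAnti w) ∧ EOIsoTo (pathEO k w hw) P

/-- A flipped path: obtained from a monotone path (with at least 3 edges) by swapping
either the two smallest or the two largest labels. -/
def IsFlippedPath {V : Type} [Fintype V] (P : EOGraph V) : Prop :=
  ∃ (k : ℕ) (hk : 4 ≤ k) (w : Fin k → ℝ) (hw : StrictMono w),
    EOIsoTo (pathEO k (w ∘ (Equiv.swap (⟨0, by omega⟩ : Fin k) ⟨1, by omega⟩))
      (hw.injective.comp (Equiv.injective _))) P ∨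
    EOIsoTo (pathEO k (w ∘ (Equiv.swap (⟨k-3, by omega⟩ : Fin k) ⟨k-2, by omega⟩))
      (hw.injective.comp (Equiv.injective _))) P

/-- 0-1 matrix containment: `A` contains `B` if `B` can be obtained from a submatrix of `A`
by possibly changing some 1 entries to 0. -/
def MContains {m n p q : ℕ} (A : Fin m → Fin n → Bool) (B : Fin p → Fin q → Bool) : Prop :=
  ∃ (r : Fin p → Fin m) (c : Fin q → Fin n), StrictMono r ∧ StrictMono c ∧
    ∀ i j, B i j = true → A (r i) (c j) = true

/-- The extremal function of a 0-1 matrix `B`: the maximum number of 1 entries in an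
`n × n` 0-1 matrix avoiding `B`. -/
noncomputable def mex {p q : ℕ} (n : ℕ) (B : Fin p → Fin q → Bool) : ℕ :=
  sSup {k | ∃ A : Fin n → Fin n → Bool, ¬ MContains A B ∧
    k = (Finset.univ.filter fun ij : Fin n × Fin n => A ij.1 ij.2 = true).card}

/-- The staircase with positions `p 0, …, p t` describes the matrix `A`. -/
def DescribedBy {nr nc : ℕ} (A : Fin nr → Fin nc → Bool) (t : ℕ)
    (p : Fin (t + 1) → Fin nr × Fin nc) : Prop :=
  (∀ k : Fin t,
      ((p k.succ).1.val = (p k.castSucc).1.val + 1 ∧ (p k.succ).2 = (p k.castSucc).2) ∨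
      ((p k.succ).1 = (p k.castSucc).1 ∧ (p k.succ).2.val = (p k.castSucc).2.val + 1)) ∧
  ∀ i j, A i j = true ↔
    ((∃ k, p k = (i, j)) ∨
     (i = (p 0).1 ∧ j < (p 0).2) ∨ (j = (p 0).2 ∧ i < (p 0).1) ∨
     (i = (p (Fin.last t)).1 ∧ (p (Fin.last t)).2 < j) ∨
     (j = (p (Fin.last t)).2 ∧ (p (Fin.last t)).1 < i))

/-- A staircase matrix: `A`, or `A` with the order of its columns reversed, is described
by a staircase. -/
def IsStaircaseMatrix {nr nc : ℕ} (A : Fin nr → Fin nc → Bool) : Prop :=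
  (∃ t p, DescribedBy A t p) ∨ (∃ t p, DescribedBy (fun i j => A i j.rev) t p)

/-- The bipartite graph whose bipartite adjacency matrix is `A`. -/
def MatrixGraph {nr nc : ℕ} (A : Fin nr → Fin nc → Bool) : SimpleGraph (Fin nr ⊕ Fin nc) :=
  SimpleGraph.fromRel fun u v =>
    match u, v with
    | .inl i, .inr j => A i j = true
    | _, _ => False

/-- A connected 0-1 matrix: the bipartite adjacency matrix of a connected graph. -/
def IsConnectedMatrix {nr nc : ℕ} (A : Fin nr → Fin nc → Bool) : Prop :=
  (MatrixGraph A).Connected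

namespace Stmt9Aux
open Finset
open scoped Classical
variable {n : ℕ}

def good (E : Finset (Sym2 (Fin n))) (L : Sym2 (Fin n) → ℝ) (s : ℕ) : ℕ → Sym2 (Fin n) → Prop
  | 0, e => e ∈ E
  | j+1, e => good E L s j e ∧
      ∀ v ∈ e, s ≤ (E.filter fun f => good E L s j f ∧ v ∈ f ∧ L e < L f).card

variable {E : Finset (Sym2 (Fin n))} {L : Sym2 (Fin n) → ℝ} {s : ℕ}

lemma good_mem : ∀ {j e}, good E L s j e → e ∈ E := by
  intro j
  induction j with
  | zero => intro e h; exact h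
  | succ j ih => intro e h; exact ih h.1

/-- choose an edge at `v`, good at level `j`, label above `L e`, other endpoint outside `A`. -/
lemma choose_ext (hdiag : ∀ e ∈ E, ¬ e.IsDiag) {j : ℕ} {e : Sym2 (Fin n)} {v : Fin n}
    {A : Finset (Fin n)}
    (hcard : s ≤ (E.filter fun f => good E L s j f ∧ v ∈ f ∧ L e < L f).card)
    (hA : A.card < s) :
    ∃ w, w ∉ A ∧ good E L s j s(v, w) ∧ L e < L s(v, w) := by
  by_contra hcon
  push_neg at hcon
  have hsub : (E.filter fun f => good E L s j f ∧ v ∈ f ∧ L e < L f) ⊆ A.image (fun a => s(v, a)) := by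
    intro f hf
    rcases Finset.mem_filter.mp hf with ⟨hfE, hg, hv, hlt⟩
    obtain ⟨w, rfl⟩ := Sym2.mem_iff_exists.mp hv
    by_cases hw : w ∈ A
    · exact Finset.mem_image.mpr ⟨w, hw, rfl⟩
    · exact absurd hlt (by simpa using (hcon w hw hg))
  have := Finset.card_le_card hsub
  have := Finset.card_image_le (s := A) (f := fun a => s(v, a))
  omega

lemma ext_path (hdiag : ∀ e ∈ E, ¬ e.IsDiag) :
    ∀ (j : ℕ) (u v : Fin n), good E L s j s(u, v) →
    ∀ A : Finset (Fin n), u ∈ A → v ∈ A → A.card + j ≤ s →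
    ∃ p : ℕ → Fin n, p 0 = u ∧ p 1 = v ∧
      (∀ i ≤ j, s(p i, p (i+1)) ∈ E) ∧
      (∀ i < j, L s(p i, p (i+1)) < L s(p (i+1), p (i+2))) ∧
      (∀ i i', i ≤ j+1 → i' ≤ j+1 → p i = p i' → i = i') ∧
      (∀ i, 2 ≤ i → i ≤ j+1 → p i ∉ A) := by
  intro j
  induction j with
  | zero =>
      intro u v hg A hu hv hs
      have hne : u ≠ v := by
        intro h; exact hdiag _ (good_mem hg) (by rw [h]; exact Sym2.mk_isDiag_iff.mpr rfl)
      refine ⟨fun i => if i = 0 then u else v, rfl, rfl, ?_, ?_, ?_, ?_⟩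
      · intro i hi
        have : i = 0 := by omega
        subst this
        simpa using good_mem hg
      · intro i hi; omega
      · intro i i' hi hi' hp
        interval_cases i <;> interval_cases i' <;> simp_all
      · intro i h2 h1; omega
  | succ j ih =>
      intro u v hg A hu hv hs
      have hgj : good E L s j s(u,v) := hg.1
      have hcard := hg.2 v (Sym2.mem_mk_right u v)
      obtain ⟨w, hwA, hgood, hlt⟩ := choose_ext (A := A) hdiag hcard (by omega)
      obtain ⟨q, hq0, hq1, hqE, hqlt, hqinj, hqA⟩ :=
        ih v w hgood (insert w A) (Finset.mem_insert_of_mem hv) (Finset.mem_insert_self w A)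
          (by have := Finset.card_insert_le w A; omega)
      have hne : u ≠ v := by
        intro h; exact hdiag _ (good_mem hgj) (by rw [h]; exact Sym2.mk_isDiag_iff.mpr rfl)
      refine ⟨fun i => if i = 0 then u else q (i - 1), rfl, by simp [hq0], ?_, ?_, ?_, ?_⟩
      · intro i hi
        by_cases h0 : i = 0
        · subst h0; simp only [if_pos rfl, if_neg one_ne_zero]
          have : q (1-1) = v := by simpa using hq0
          rw [this]
          exact good_mem hgj
        · have h1 : i - 1 ≤ j := by omega
          have e1 : ¬ (i = 0) := h0
          have e2 : ¬ (i + 1 = 0) := by omega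
          simp only [if_neg e1, if_neg e2]
          have : i + 1 - 1 = (i-1) + 1 := by omega
          rw [this]
          exact hqE (i-1) h1
      · intro i hi
        by_cases h0 : i = 0
        · subst h0
          simp only [if_pos rfl, if_neg one_ne_zero, if_neg (two_ne_zero)]
          have h2 : (2 : ℕ) - 1 = 0 + 1 := rfl
          have h1 : (1 : ℕ) - 1 = 0 := rfl
          rw [h1, h2, hq0, hq1]
          exact hlt
        · have e2 : ¬ (i + 1 = 0) := by omega
          have e3 : ¬ (i + 2 = 0) := by omega
          simp only [if_neg h0, if_neg e2, if_neg e3]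
          have : i + 1 - 1 = (i-1) + 1 := by omega
          have h2 : i + 2 - 1 = (i-1) + 2 := by omega
          rw [this, h2]
          exact hqlt (i-1) (by omega)
      · intro i i' hi hi' hp
        have key : ∀ m, 1 ≤ m → m ≤ j + 2 → q (m - 1) ≠ u := by
          intro m hm1 hm2 hqu
          rcases Nat.lt_or_ge (m-1) 1 with h|h
          · have : m - 1 = 0 := by omega
            rw [this, hq0] at hqu; exact hne hqu.symm
          · rcases Nat.lt_or_ge (m-1) 2 with h'|h'
            · have : m - 1 = 1 := by omega
              rw [this, hq1] at hqu
              exact hwA (hqu ▸ hu)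
            · have := hqA (m-1) h' (by omega)
              rw [hqu] at this
              exact this (Finset.mem_insert_of_mem hu)
        by_cases h0 : i = 0 <;> by_cases h0' : i' = 0
        · omega
        · subst h0
          simp only [if_pos rfl, if_neg h0'] at hp
          exact absurd hp.symm (key i' (by omega) (by omega))
        · subst h0'
          simp only [if_pos rfl, if_neg h0] at hp
          exact absurd hp (key i (by omega) (by omega))
        · simp only [if_neg h0, if_neg h0'] at hp
          have := hqinj (i-1) (i'-1) (by omega) (by omega) hp
          omega
      · intro i h2 h1
        simp only [if_neg (by omega : ¬ i = 0)]
        rcases Nat.lt_or_ge (i-1) 2 with h|h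
        · have : i - 1 = 1 := by omega
          rw [this, hq1]; exact hwA
        · intro hmem
          exact hqA (i-1) h (by omega) (Finset.mem_insert_of_mem hmem)


lemma good_mono : ∀ {j j' e}, j' ≤ j → good E L s j e → good E L s j' e := by
  intro j
  induction j with
  | zero =>
      intro j' e h hg
      have : j' = 0 := by omega
      subst this; exact hg
  | succ j ih =>
      intro j' e h hg
      rcases Nat.lt_or_ge j' (j+1) with h'|h'
      · exact ih (by omega) hg.1
      · have : j' = j+1 := by omega
        subst this; exact hg

lemma sym2_rep (e : Sym2 (Fin n)) : ∃ x y : Fin n, e = s(x, y) :=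
  Sym2.inductionOn e (fun x y => ⟨x, y, rfl⟩)

lemma edge_ne {x y : Fin n} (hdiag : ∀ e ∈ E, ¬ e.IsDiag) (h : s(x,y) ∈ E) : x ≠ y := by
  intro hxy
  exact hdiag _ h (by rw [hxy]; exact Sym2.mk_isDiag_iff.mpr rfl)

lemma flipcore (hdiag : ∀ e ∈ E, ¬ e.IsDiag) {K : ℕ} (hK : 3 ≤ K)
    (x y w : Fin n) (hgood : good E L (K+2) K s(x,y))
    (hbE : s(x,w) ∈ E) (hlab : L s(x,y) < L s(x,w)) (hwy : w ≠ y)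
    (hs2 : K + 2 ≤ (E.filter fun f => good E L (K+2) (K-1) f ∧ y ∈ f ∧ L s(x,w) < L f).card) :
    ∃ p : ℕ → Fin n, (∀ i < K, s(p i, p (i+1)) ∈ E) ∧
      (L s(p 1, p 2) < L s(p 0, p 1)) ∧ (L s(p 0, p 1) < L s(p 2, p 3)) ∧
      (∀ i, 2 ≤ i → i + 1 < K → L s(p i, p (i+1)) < L s(p (i+1), p (i+2))) ∧
      (∀ i i', i ≤ K → i' ≤ K → p i = p i' → i = i') := by
  have hxy : x ≠ y := edge_ne hdiag (good_mem hgood)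
  have hwx : w ≠ x := (edge_ne hdiag hbE).symm
  obtain ⟨z, hzA, hgz, hlz⟩ := choose_ext (A := ({x, y, w} : Finset (Fin n)))
    hdiag hs2 (by
      have := Finset.card_insert_le x ({y, w} : Finset (Fin n))
      have := Finset.card_insert_le y ({w} : Finset (Fin n))
      simp only [Finset.card_singleton] at *
      omega)
  have hzx : z ≠ x := by intro h; exact hzA (by simp [h])
  have hzy : z ≠ y := (edge_ne hdiag (good_mem hgz)).symm
  have hzw : z ≠ w := by intro h; exact hzA (by simp [h])
  have hgz' : good E L (K+2) (K-3) s(y,z) := good_mono (by omega) hgz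
  obtain ⟨q, hq0, hq1, hqE, hqlt, hqinj, hqA⟩ :=
    ext_path hdiag (K-3) y z hgz' ({x, w, y, z}) (by simp) (by simp)
      (by
        have h1 := Finset.card_insert_le x ({w, y, z} : Finset (Fin n))
        have h2 := Finset.card_insert_le w ({y, z} : Finset (Fin n))
        have h3 := Finset.card_insert_le y ({z} : Finset (Fin n))
        simp only [Finset.card_singleton] at *
        omega)
  refine ⟨fun i => if i = 0 then w else if i = 1 then x else q (i-2), ?_, ?_, ?_, ?_, ?_⟩
  · intro i hi
    by_cases h0 : i = 0
    · subst h0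
      simp only [if_pos rfl, if_neg one_ne_zero, if_pos rfl]
      rw [Sym2.eq_swap]; exact hbE
    · by_cases h1 : i = 1
      · subst h1
        simp only [if_neg one_ne_zero, if_pos rfl, if_neg (by omega : ¬ (1+1) = 0),
          if_neg (by omega : ¬ (1+1) = 1)]
        have : (1 + 1 : ℕ) - 2 = 0 := rfl
        rw [this, hq0]
        exact good_mem hgood
      · simp only [if_neg h0, if_neg h1, if_neg (by omega : ¬ (i+1) = 0),
          if_neg (by omega : ¬ (i+1) = 1)]
        have : i + 1 - 2 = (i-2) + 1 := by omega
        rw [this]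
        exact hqE (i-2) (by omega)
  · have hsw : s(w,x) = s(x,w) := Sym2.eq_swap
    show L s(x, q 0) < L s(w, x)
    rw [hq0, hsw]
    exact hlab
  · have hsw : s(w,x) = s(x,w) := Sym2.eq_swap
    show L s(w, x) < L s(q 0, q 1)
    rw [hq0, hq1, hsw]
    exact hlz
  · intro i h2i hiK
    simp only [if_neg (by omega : ¬ i = 0), if_neg (by omega : ¬ i = 1),
      if_neg (by omega : ¬ (i+1) = 0), if_neg (by omega : ¬ (i+1) = 1),
      if_neg (by omega : ¬ (i+2) = 0), if_neg (by omega : ¬ (i+2) = 1)]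
    have e1 : i + 1 - 2 = (i-2) + 1 := by omega
    have e2 : i + 2 - 2 = (i-2) + 2 := by omega
    rw [e1, e2]
    exact hqlt (i-2) (by omega)
  · intro i i' hi hi' hp
    have key : ∀ m, 2 ≤ m → m ≤ K → q (m-2) ≠ w ∧ q (m-2) ≠ x := by
      intro m hm2 hmK
      rcases Nat.lt_or_ge (m-2) 1 with h|h
      · have : m - 2 = 0 := by omega
        rw [this, hq0]
        exact ⟨Ne.symm hwy, Ne.symm hxy⟩
      · rcases Nat.lt_or_ge (m-2) 2 with h'|h'
        · have : m - 2 = 1 := by omega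
          rw [this, hq1]
          exact ⟨hzw, hzx⟩
        · have hav := hqA (m-2) h' (by omega)
          constructor
          · intro hc; exact hav (by simp [hc])
          · intro hc; exact hav (by simp [hc])
    by_cases h0 : i = 0 <;> by_cases h0' : i' = 0
    · omega
    · by_cases h1' : i' = 1
      · subst h0; subst h1'
        simp only [reduceIte] at hp
        exact absurd hp hwx
      · subst h0
        simp only [reduceIte, if_neg h0', if_neg h1'] at hp
        exact absurd hp.symm (key i' (by omega) hi').1
    · by_cases h1 : i = 1
      · subst h0'; subst h1
        simp only [reduceIte] at hp
        exact absurd hp.symm hwx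
      · subst h0'
        simp only [reduceIte, if_neg h0, if_neg h1] at hp
        exact absurd hp (key i (by omega) hi).1
    · by_cases h1 : i = 1 <;> by_cases h1' : i' = 1
      · omega
      · subst h1
        simp only [reduceIte, if_neg h0', if_neg h1'] at hp
        exact absurd hp.symm (key i' (by omega) hi').2
      · subst h1'
        simp only [reduceIte, if_neg h0, if_neg h1] at hp
        exact absurd hp (key i (by omega) hi).2
      · simp only [if_neg h0, if_neg h1, if_neg h0', if_neg h1'] at hp
        have := hqinj (i-2) (i'-2) (by omega) (by omega) hp
        omega

lemma filter_top_card_le (S : Finset (Sym2 (Fin n)))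
    (hinj : ∀ e ∈ S, ∀ f ∈ S, L e = L f → e = f) :
    (S.filter fun e => (S.filter fun f => L e < L f).card < s).card ≤ s := by
  set T := S.filter fun e => (S.filter fun f => L e < L f).card < s with hT
  by_contra hc
  push_neg at hc
  have hTne : T.Nonempty := Finset.card_pos.mp (by omega)
  obtain ⟨e0, he0, hmin⟩ := Finset.exists_min_image T L hTne
  have hsub : T.erase e0 ⊆ S.filter fun f => L e0 < L f := by
    intro f hf
    have hfT := Finset.mem_of_mem_erase hf
    have hfS : f ∈ S := (Finset.mem_filter.mp hfT).1
    refine Finset.mem_filter.mpr ⟨hfS, ?_⟩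
    have hle := hmin f hfT
    rcases lt_or_eq_of_le hle with h|h
    · exact h
    · exact absurd (hinj e0 (Finset.mem_filter.mp he0).1 f hfS h).symm (Finset.ne_of_mem_erase hf)
  have h1 : s ≤ (T.erase e0).card := by
    rw [Finset.card_erase_of_mem he0]; omega
  have h2 := Finset.card_le_card hsub
  have := (Finset.mem_filter.mp he0).2
  omega

lemma good_card_step (hinj : ∀ e ∈ E, ∀ f ∈ E, L e = L f → e = f) (j : ℕ) :
    (E.filter (good E L s j)).card ≤ (E.filter (good E L s (j+1))).card + s * n := by
  classical
  set topv : Fin n → Finset (Sym2 (Fin n)) := fun v =>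
    (E.filter fun f => good E L s j f ∧ v ∈ f).filter
      (fun e => ((E.filter fun f => good E L s j f ∧ v ∈ f).filter fun f => L e < L f).card < s)
    with htopv
  have hsub : E.filter (good E L s j) ⊆
      (E.filter (good E L s (j+1))) ∪ Finset.univ.biUnion topv := by
    intro e he
    rcases Finset.mem_filter.mp he with ⟨heE, hgj⟩
    by_cases hg : good E L s (j+1) e
    · exact Finset.mem_union_left _ (Finset.mem_filter.mpr ⟨heE, hg⟩)
    · refine Finset.mem_union_right _ ?_
      have : ∃ v ∈ e, (E.filter fun f => good E L s j f ∧ v ∈ f ∧ L e < L f).card < s := by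
        by_contra hcon
        push_neg at hcon
        exact hg ⟨hgj, fun v hv => hcon v hv⟩
      obtain ⟨v, hv, hcard⟩ := this
      refine Finset.mem_biUnion.mpr ⟨v, Finset.mem_univ v, ?_⟩
      refine Finset.mem_filter.mpr ⟨Finset.mem_filter.mpr ⟨heE, hgj, hv⟩, ?_⟩
      have heq : (E.filter fun f => good E L s j f ∧ v ∈ f).filter (fun f => L e < L f)
          = E.filter fun f => good E L s j f ∧ v ∈ f ∧ L e < L f := by
        rw [Finset.filter_filter]
        apply Finset.filter_congr
        intro f _
        constructor
        · rintro ⟨⟨h1, h2⟩, h3⟩; exact ⟨h1, h2, h3⟩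
        · rintro ⟨h1, h2, h3⟩; exact ⟨⟨h1, h2⟩, h3⟩
      rw [heq]; exact hcard
  have hb : (Finset.univ.biUnion topv).card ≤ s * n := by
    calc (Finset.univ.biUnion topv).card ≤ ∑ v : Fin n, (topv v).card := Finset.card_biUnion_le
    _ ≤ ∑ _v : Fin n, s := by
        apply Finset.sum_le_sum
        intro v _
        exact filter_top_card_le _ (fun e he f hf h =>
          hinj e (Finset.mem_filter.mp he).1 f (Finset.mem_filter.mp hf).1 h)
    _ = n * s := by simp [Finset.sum_const, mul_comm]
    _ = s * n := mul_comm n s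
  calc (E.filter (good E L s j)).card
      ≤ ((E.filter (good E L s (j+1))) ∪ Finset.univ.biUnion topv).card := Finset.card_le_card hsub
    _ ≤ (E.filter (good E L s (j+1))).card + (Finset.univ.biUnion topv).card := Finset.card_union_le _ _
    _ ≤ _ := by omega

lemma good_card (hinj : ∀ e ∈ E, ∀ f ∈ E, L e = L f → e = f) (j : ℕ) :
    E.card ≤ (E.filter (good E L s j)).card + j * (s * n) := by
  induction j with
  | zero =>
      simp only [Nat.zero_mul, Nat.add_zero]
      have : E.filter (good E L s 0) = E := Finset.filter_true_of_mem (fun e he => he)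
      rw [this]
  | succ j ih =>
      have := good_card_step (E := E) (L := L) (s := s) hinj j
      have h2 : (j+1) * (s*n) = j * (s*n) + s*n := by ring
      omega

lemma exists_good (hinj : ∀ e ∈ E, ∀ f ∈ E, L e = L f → e = f) (j : ℕ)
    (h : j * (s * n) < E.card) : ∃ e, good E L s j e := by
  have := good_card (E := E) (L := L) (s := s) hinj j
  have : (E.filter (good E L s j)).Nonempty := Finset.card_pos.mp (by omega)
  obtain ⟨e, he⟩ := this
  exact ⟨e, (Finset.mem_filter.mp he).2⟩


lemma exists_inc_path (hdiag : ∀ e ∈ E, ¬ e.IsDiag)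
    (hinj : ∀ e ∈ E, ∀ f ∈ E, L e = L f → e = f) {K : ℕ} (hK : 1 ≤ K)
    (hs : s = K + 2) (hbig : (K+2)*((K+2)*n) < E.card) :
    ∃ p : ℕ → Fin n, (∀ i < K, s(p i, p (i+1)) ∈ E) ∧
      (∀ i, i + 1 < K → L s(p i, p (i+1)) < L s(p (i+1), p (i+2))) ∧
      (∀ i i', i ≤ K → i' ≤ K → p i = p i' → i = i') := by
  subst hs
  obtain ⟨e, hg⟩ := exists_good (s := K+2) hinj (K-1) (by
    have h1 : (K-1) * ((K+2)*n) ≤ (K+2) * ((K+2)*n) := by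
      apply Nat.mul_le_mul_right
      omega
    omega)
  obtain ⟨x, y, rfl⟩ := sym2_rep e
  have hxy : x ≠ y := edge_ne hdiag (good_mem hg)
  obtain ⟨p, hp0, hp1, hpE, hplt, hpinj, hpA⟩ :=
    ext_path hdiag (K-1) x y hg {x, y} (by simp) (by simp)
      (by
        have := Finset.card_insert_le x ({y} : Finset (Fin n))
        simp only [Finset.card_singleton] at this
        omega)
  exact ⟨p, fun i hi => hpE i (by omega), fun i hi => hplt i (by omega),
    fun i i' hi hi' => hpinj i i' (by omega) (by omega)⟩

lemma exists_flip_path (hdiag : ∀ e ∈ E, ¬ e.IsDiag)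
    (hinj : ∀ e ∈ E, ∀ f ∈ E, L e = L f → e = f) {K : ℕ} (hK : 3 ≤ K)
    (hs : s = K + 2) (hbig : (K+2)*((K+2)*n) < E.card) :
    ∃ p : ℕ → Fin n, (∀ i < K, s(p i, p (i+1)) ∈ E) ∧
      (L s(p 1, p 2) < L s(p 0, p 1)) ∧ (L s(p 0, p 1) < L s(p 2, p 3)) ∧
      (∀ i, 2 ≤ i → i + 1 < K → L s(p i, p (i+1)) < L s(p (i+1), p (i+2))) ∧
      (∀ i i', i ≤ K → i' ≤ K → p i = p i' → i = i') := by
  subst hs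
  obtain ⟨a, hg⟩ := exists_good (s := K+2) hinj K (by
    have h1 : K * ((K+2)*n) ≤ (K+2) * ((K+2)*n) := by
      apply Nat.mul_le_mul_right
      omega
    omega)
  obtain ⟨x, y, rfl⟩ := sym2_rep a
  have hxy : x ≠ y := edge_ne hdiag (good_mem hg)
  have hgK : good E L (K+2) ((K-1)+1) s(x,y) := by
    have : (K-1)+1 = K := by omega
    rw [this]; exact hg
  have hcx := hgK.2 x (Sym2.mem_mk_left x y)
  have hcy := hgK.2 y (Sym2.mem_mk_right x y)
  set Tx := E.filter fun f => good E L (K+2) (K-1) f ∧ x ∈ f ∧ L s(x,y) < L f with hTx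
  set Ty := E.filter fun f => good E L (K+2) (K-1) f ∧ y ∈ f ∧ L s(x,y) < L f with hTy
  have hTxne : Tx.Nonempty := Finset.card_pos.mp (by omega)
  have hTyne : Ty.Nonempty := Finset.card_pos.mp (by omega)
  obtain ⟨bx, hbx, hbxmin⟩ := Finset.exists_min_image Tx L hTxne
  obtain ⟨by', hby, hbymin⟩ := Finset.exists_min_image Ty L hTyne
  rcases Finset.mem_filter.mp hbx with ⟨hbxE, hbxg, hbxmem, hbxlt⟩
  rcases Finset.mem_filter.mp hby with ⟨hbyE, hbyg, hbymem, hbylt⟩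
  have hne : bx ≠ by' := by
    intro h
    have : bx = s(x,y) := (Sym2.mem_and_mem_iff hxy).mp ⟨hbxmem, h ▸ hbymem⟩
    rw [this] at hbxlt
    exact lt_irrefl _ hbxlt
  have hLne : L bx ≠ L by' := fun h => hne (hinj bx hbxE by' hbyE h)
  obtain ⟨w, rfl⟩ := Sym2.mem_iff_exists.mp hbxmem
  obtain ⟨w', rfl⟩ := Sym2.mem_iff_exists.mp hbymem
  rcases lt_or_gt_of_ne hLne with hlt | hlt
  · -- pendant at x, continue from y
    have hwy : w ≠ y := by
      intro h
      have : s(x,w) = s(x,y) := by rw [h]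
      rw [this] at hbxlt
      exact lt_irrefl _ hbxlt
    refine flipcore hdiag hK x y w hg hbxE ?_ hwy ?_
    · exact hbxlt
    · have hsub : Ty ⊆ E.filter fun f => good E L (K+2) (K-1) f ∧ y ∈ f ∧ L s(x,w) < L f := by
        intro f hf
        rcases Finset.mem_filter.mp hf with ⟨h1, h2, h3, h4⟩
        exact Finset.mem_filter.mpr ⟨h1, h2, h3, lt_of_lt_of_le hlt (hbymin f hf)⟩
      have := Finset.card_le_card hsub
      omega
  · -- pendant at y, continue from x
    have hwx : w' ≠ x := by
      intro h
      have : s(y,w') = s(x,y) := by rw [h, Sym2.eq_swap]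
      rw [this] at hbylt
      exact lt_irrefl _ hbylt
    have hgyx : good E L (K+2) K s(y,x) := by rw [Sym2.eq_swap]; exact hg
    have hlab : L s(y,x) < L s(y,w') := by rw [Sym2.eq_swap (a := y) (b := x)]; exact hbylt
    refine flipcore hdiag hK y x w' hgyx hbyE hlab hwx ?_
    have hsub : Tx ⊆ E.filter fun f => good E L (K+2) (K-1) f ∧ x ∈ f ∧ L s(y,w') < L f := by
      intro f hf
      rcases Finset.mem_filter.mp hf with ⟨h1, h2, h3, h4⟩
      exact Finset.mem_filter.mpr ⟨h1, h2, h3, lt_of_lt_of_le hlt (hbxmin f hf)⟩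
    have := Finset.card_le_card hsub
    omega

end Stmt9Aux


namespace Stmt9Glue
open Finset Stmt9Aux

lemma sym2_rep' {α : Type*} (e : Sym2 α) : ∃ x y, e = s(x, y) :=
  Sym2.inductionOn e (fun x y => ⟨x, y, rfl⟩)

lemma chain_lt {K lo : ℕ} {ℓ : ℕ → ℝ} (h : ∀ i, lo ≤ i → i + 1 < K → ℓ i < ℓ (i+1)) :
    ∀ j i, lo ≤ i → i < j → j < K → ℓ i < ℓ j := by
  intro j
  induction j with
  | zero => intro i _ h1 _; omega
  | succ j ih =>
      intro i hlo h1 h2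
      rcases Nat.lt_or_ge i j with h3 | h3
      · exact lt_trans (ih i hlo h3 (by omega)) (h j (by omega) (by omega))
      · have : i = j := by omega
        subst this
        exact h i hlo (by omega)

lemma three_le_k {V : Type} [Fintype V] (P : EOGraph V) {k : ℕ} (φ : V ≃ Fin k)
    (hadj : ∀ a b, P.graph.Adj a b ↔ (SimpleGraph.pathGraph k).Adj (φ a) (φ b))
    (h2 : 2 ≤ P.graph.edgeSet.ncard) : 3 ≤ k := by
  have hfin : P.graph.edgeSet.Finite := Set.toFinite _
  obtain ⟨e1, e2, he1, he2, hne⟩ := (Set.one_lt_ncard_iff hfin).mp (by omega)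
  obtain ⟨a, b, rfl⟩ := sym2_rep' e1
  obtain ⟨c, d, rfl⟩ := sym2_rep' e2
  have h1 : s(φ a, φ b) ∈ (SimpleGraph.pathGraph k).edgeSet :=
    (SimpleGraph.mem_edgeSet _).mpr ((hadj a b).mp ((SimpleGraph.mem_edgeSet _).mp he1))
  have h2' : s(φ c, φ d) ∈ (SimpleGraph.pathGraph k).edgeSet :=
    (SimpleGraph.mem_edgeSet _).mpr ((hadj c d).mp ((SimpleGraph.mem_edgeSet _).mp he2))
  obtain ⟨i1, j1, hx1, hy1⟩ := pathGraph_edge_form h1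
  obtain ⟨i2, j2, hx2, hy2⟩ := pathGraph_edge_form h2'
  by_contra hk
  push_neg at hk
  have hi1 : (i1 : ℕ) = 0 := by have := j1.is_lt; omega
  have hj1 : (j1 : ℕ) = 1 := by omega
  have hi2 : (i2 : ℕ) = 0 := by have := j2.is_lt; omega
  have hj2 : (j2 : ℕ) = 1 := by omega
  have hii : i1 = i2 := Fin.ext (by omega)
  have hjj : j1 = j2 := Fin.ext (by omega)
  have heq : Sym2.map φ s(a,b) = Sym2.map φ s(c,d) := by
    rw [Sym2.map_pair_eq, Sym2.map_pair_eq, hx1, hx2, hii, hjj]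
  exact hne (Sym2.map.injective φ.injective heq)

lemma glue {n : ℕ} (G : EOGraph (Fin n)) {V : Type} [Fintype V] (P : EOGraph V)
    {k : ℕ} (w' : Fin k → ℝ) (hw' : Function.Injective w')
    (iso : EOIsoTo (pathEO k w' hw') P)
    (p : ℕ → Fin n)
    (hpE : ∀ i : ℕ, i + 1 < k → s(p i, p (i+1)) ∈ G.graph.edgeSet)
    (hinj : ∀ i i' : ℕ, i < k → i' < k → p i = p i' → i = i')
    (hcomp : ∀ i j : Fin k, (i:ℕ) + 1 < k → (j:ℕ) + 1 < k →
        w' i < w' j → G.label s(p i, p ((i:ℕ)+1)) < G.label s(p j, p ((j:ℕ)+1))) :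
    EOContains G P := by
  obtain ⟨φ, hadj, hord⟩ := iso
  have hadj' : ∀ a b, P.graph.Adj a b →
      (SimpleGraph.pathGraph k).Adj (φ.symm a) (φ.symm b) := by
    intro a b hab
    have := (hadj (φ.symm a) (φ.symm b)).mpr
    simp only [Equiv.apply_symm_apply] at this
    exact this hab
  refine ⟨fun v => p ((φ.symm v : Fin k) : ℕ), ?_, ?_, ?_⟩
  · intro a b h
    have h1 := hinj _ _ (Fin.is_lt _) (Fin.is_lt _) h
    have h2 : φ.symm a = φ.symm b := Fin.ext h1
    simpa using congrArg φ h2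
  · intro a b hab
    have hP := hadj' a b hab
    rcases SimpleGraph.pathGraph_adj.mp hP with h | h
    · have hE := hpE ((φ.symm a : Fin k) : ℕ) (by rw [h]; exact (φ.symm b).is_lt)
      have := (SimpleGraph.mem_edgeSet _).mp hE
      rwa [h] at this
    · have hE := hpE ((φ.symm b : Fin k) : ℕ) (by rw [h]; exact (φ.symm a).is_lt)
      have := (SimpleGraph.mem_edgeSet _).mp hE
      rw [h] at this
      exact this.symm
  · intro e heP e' heP' hlab
    obtain ⟨a, b, rfl⟩ := sym2_rep' e
    obtain ⟨c, d, rfl⟩ := sym2_rep' e'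
    have h1 : s(φ.symm a, φ.symm b) ∈ (SimpleGraph.pathGraph k).edgeSet :=
      (SimpleGraph.mem_edgeSet _).mpr (hadj' a b ((SimpleGraph.mem_edgeSet _).mp heP))
    have h2 : s(φ.symm c, φ.symm d) ∈ (SimpleGraph.pathGraph k).edgeSet :=
      (SimpleGraph.mem_edgeSet _).mpr (hadj' c d ((SimpleGraph.mem_edgeSet _).mp heP'))
    obtain ⟨i1, j1, hx1, hy1⟩ := pathGraph_edge_form h1
    obtain ⟨i2, j2, hx2, hy2⟩ := pathGraph_edge_form h2
    have hmap1 : Sym2.map φ s(φ.symm a, φ.symm b) = s(a, b) := by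
      rw [Sym2.map_pair_eq]; simp
    have hmap2 : Sym2.map φ s(φ.symm c, φ.symm d) = s(c, d) := by
      rw [Sym2.map_pair_eq]; simp
    have hiff := hord _ h1 _ h2
    rw [hmap1, hmap2] at hiff
    have hw1 : (pathEO k w' hw').label s(φ.symm a, φ.symm b) = w' i1 := by
      show pathLabel w' s(φ.symm a, φ.symm b) = w' i1
      rw [hx1]
      have : min i1 j1 = i1 := min_eq_left (Fin.le_def.mpr (by omega))
      simp only [pathLabel, Sym2.lift_mk]
      rw [this]
    have hw2 : (pathEO k w' hw').label s(φ.symm c, φ.symm d) = w' i2 := by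
      show pathLabel w' s(φ.symm c, φ.symm d) = w' i2
      rw [hx2]
      have : min i2 j2 = i2 := min_eq_left (Fin.le_def.mpr (by omega))
      simp only [pathLabel, Sym2.lift_mk]
      rw [this]
    have hww : w' i1 < w' i2 := by
      rw [← hw1, ← hw2]
      exact hiff.mpr hlab
    have hlt := hcomp i1 i2 (by have := j1.is_lt; omega) (by have := j2.is_lt; omega) hww
    have hm1 : Sym2.map (fun v => p ((φ.symm v : Fin k) : ℕ)) s(a, b)
        = s(p (i1 : ℕ), p ((i1:ℕ)+1)) := by
      rw [Sym2.map_pair_eq]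
      rcases Sym2.eq_iff.mp hx1 with ⟨ha, hb⟩ | ⟨ha, hb⟩
      · rw [ha, hb, ← hy1]
      · rw [ha, hb, ← hy1, Sym2.eq_swap]
    have hm2 : Sym2.map (fun v => p ((φ.symm v : Fin k) : ℕ)) s(c, d)
        = s(p (i2 : ℕ), p ((i2:ℕ)+1)) := by
      rw [Sym2.map_pair_eq]
      rcases Sym2.eq_iff.mp hx2 with ⟨ha, hb⟩ | ⟨ha, hb⟩
      · rw [ha, hb, ← hy2]
      · rw [ha, hb, ← hy2, Sym2.eq_swap]
    rw [hm1, hm2]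
    exact hlt

def matchG (n : ℕ) : SimpleGraph (Fin n) where
  Adj a b := a ≠ b ∧ (a : ℕ) / 2 = (b : ℕ) / 2
  symm := ⟨fun a b ⟨h1, h2⟩ => ⟨h1.symm, h2.symm⟩⟩
  loopless := ⟨fun a ⟨h, _⟩ => h rfl⟩

noncomputable def matchEO (n : ℕ) : EOGraph (Fin n) where
  graph := matchG n
  label := Sym2.lift ⟨fun a b => ((min (a:ℕ) (b:ℕ) : ℕ) : ℝ), by
    intro a b; simp [Nat.min_comm]⟩
  inj := by
    intro e he f hf hlab
    obtain ⟨a, b, rfl⟩ := sym2_rep' e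
    obtain ⟨c, d, rfl⟩ := sym2_rep' f
    obtain ⟨hab, hab2⟩ : (matchG n).Adj a b := (SimpleGraph.mem_edgeSet _).mp he
    obtain ⟨hcd, hcd2⟩ : (matchG n).Adj c d := (SimpleGraph.mem_edgeSet _).mp hf
    simp only [Sym2.lift_mk] at hlab
    have h3 : min (a:ℕ) (b:ℕ) = min (c:ℕ) (d:ℕ) := Nat.cast_injective hlab
    have hab' : (a:ℕ) ≠ (b:ℕ) := fun h => hab (Fin.ext h)
    have hcd' : (c:ℕ) ≠ (d:ℕ) := fun h => hcd (Fin.ext h)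
    have hcase : ((a:ℕ) = c ∧ (b:ℕ) = d) ∨ ((a:ℕ) = d ∧ (b:ℕ) = c) := by omega
    rcases hcase with ⟨h4, h5⟩ | ⟨h4, h5⟩
    · rw [Fin.ext h4, Fin.ext h5]
    · rw [Fin.ext h4, Fin.ext h5, Sym2.eq_swap]

lemma matchEO_card (n : ℕ) : n / 2 ≤ (matchEO n).graph.edgeSet.ncard := by
  classical
  have hfin : (matchEO n).graph.edgeSet.Finite := Set.toFinite _
  set F : Fin (n/2) → Sym2 (Fin n) := fun i =>
    s((⟨2*(i:ℕ), by have := i.is_lt; omega⟩ : Fin n),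
      (⟨2*(i:ℕ)+1, by have := i.is_lt; omega⟩ : Fin n)) with hF
  have hFinj : Function.Injective F := by
    intro i j h
    simp only [hF] at h
    rcases Sym2.eq_iff.mp h with ⟨h1, h2⟩ | ⟨h1, h2⟩
    · have := congrArg Fin.val h1
      simp only at this
      exact Fin.ext (by omega)
    · have := congrArg Fin.val h1
      have h2' := congrArg Fin.val h2
      simp only at this h2'
      omega
  have hmem : ∀ i, F i ∈ (matchEO n).graph.edgeSet := by
    intro i
    refine (SimpleGraph.mem_edgeSet _).mpr ⟨?_, ?_⟩
    · intro h
      have := congrArg Fin.val h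
      simp only at this
      omega
    · show (2*(i:ℕ)) / 2 = (2*(i:ℕ)+1) / 2
      omega
  have h1 : (Finset.univ.image F).card = n/2 := by
    rw [Finset.card_image_of_injective _ hFinj, Finset.card_univ, Fintype.card_fin]
  have h2 : Finset.univ.image F ⊆ hfin.toFinset := by
    intro e he
    obtain ⟨i, _, rfl⟩ := Finset.mem_image.mp he
    rw [Set.Finite.mem_toFinset]
    exact hmem i
  calc n/2 = (Finset.univ.image F).card := h1.symm
    _ ≤ hfin.toFinset.card := Finset.card_le_card h2
    _ = (matchEO n).graph.edgeSet.ncard := (Set.ncard_eq_toFinset_card _ hfin).symm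

lemma matchEO_avoid {V : Type} [Fintype V] (P : EOGraph V) (hpath : IsPathEO P)
    (h2 : 2 ≤ P.graph.edgeSet.ncard) (n : ℕ) : ¬ EOContains (matchEO n) P := by
  obtain ⟨k, φ, hadj⟩ := hpath
  have hk : 3 ≤ k := three_le_k P φ hadj h2
  rintro ⟨F, hFinj, hFadj, -⟩
  set x0 := φ.symm ⟨0, by omega⟩ with hx0
  set x1 := φ.symm ⟨1, by omega⟩ with hx1
  set x2 := φ.symm ⟨2, by omega⟩ with hx2
  have h01 : P.graph.Adj x0 x1 := by
    rw [hadj]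
    simp only [hx0, hx1, Equiv.apply_symm_apply]
    exact SimpleGraph.pathGraph_adj.mpr (Or.inl rfl)
  have h12 : P.graph.Adj x1 x2 := by
    rw [hadj]
    simp only [hx1, hx2, Equiv.apply_symm_apply]
    exact SimpleGraph.pathGraph_adj.mpr (Or.inl rfl)
  have hne : x0 ≠ x2 := by
    intro h
    have := congrArg φ h
    simp only [hx0, hx2, Equiv.apply_symm_apply] at this
    have := congrArg Fin.val this
    simp at this
  obtain ⟨ha1, ha2⟩ : (matchG n).Adj (F x0) (F x1) := hFadj _ _ h01
  obtain ⟨hb1, hb2⟩ : (matchG n).Adj (F x1) (F x2) := hFadj _ _ h12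
  have hne' : F x0 ≠ F x2 := fun h => hne (hFinj h)
  have v1 : (F x0 : ℕ) ≠ (F x1 : ℕ) := fun h => ha1 (Fin.ext h)
  have v2 : (F x1 : ℕ) ≠ (F x2 : ℕ) := fun h => hb1 (Fin.ext h)
  have v3 : (F x0 : ℕ) ≠ (F x2 : ℕ) := fun h => hne' (Fin.ext h)
  omega

lemma flip_bot_aux {K : ℕ} (hK : 3 ≤ K) (ℓ : ℕ → ℝ)
    (h10 : ℓ 1 < ℓ 0) (h02 : ℓ 0 < ℓ 2)
    (hch : ∀ i, 2 ≤ i → i + 1 < K → ℓ i < ℓ (i+1)) :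
    ∀ a b : ℕ, a < K → b < K →
    (if a = 0 then 1 else if a = 1 then 0 else a) <
      (if b = 0 then 1 else if b = 1 then 0 else b) →
    ℓ a < ℓ b := by
  intro a b ha hb hab
  have hchain := chain_lt (K := K) (lo := 2) hch
  have h0b : ∀ b', 2 ≤ b' → b' < K → ℓ 0 < ℓ b' := by
    intro b' h1 h1'
    rcases Nat.lt_or_ge 2 b' with hgt | hle
    · exact lt_trans h02 (hchain b' 2 le_rfl hgt h1')
    · have : b' = 2 := by omega
      subst this; exact h02
  by_cases ha0 : a = 0
  · subst ha0
    have hb2 : 2 ≤ b := by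
      by_cases hb0 : b = 0
      · subst hb0; simp at hab
      · by_cases hb1 : b = 1
        · subst hb1; simp at hab
        · omega
    exact h0b b hb2 hb
  · by_cases ha1 : a = 1
    · subst ha1
      by_cases hb0 : b = 0
      · subst hb0; exact h10
      · by_cases hb1 : b = 1
        · subst hb1; simp at hab
        · exact lt_trans h10 (h0b b (by omega) hb)
    · have ha2 : 2 ≤ a := by omega
      rw [if_neg ha0, if_neg ha1] at hab
      have hb2 : 2 ≤ b ∧ a < b := by
        by_cases hb0 : b = 0
        · subst hb0; simp at hab; omega
        · by_cases hb1 : b = 1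
          · subst hb1; simp at hab
          · rw [if_neg hb0, if_neg hb1] at hab; omega
      exact hchain b a ha2 hb2.2 hb

lemma flip_top_aux {K : ℕ} (hK : 3 ≤ K) (m : ℕ → ℝ)
    (h1 : m (K-1) < m (K-2)) (h2 : m (K-3) < m (K-1))
    (hch : ∀ i, i + 1 < K - 2 → m i < m (i+1)) :
    ∀ a b : ℕ, a < K → b < K →
    (if a = K-2 then K-1 else if a = K-1 then K-2 else a) <
      (if b = K-2 then K-1 else if b = K-1 then K-2 else b) →
    m a < m b := by
  intro a b ha hb hab
  have hchain := chain_lt (K := K - 2) (lo := 0) (fun i _ hi => hch i hi)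
  have hmK1 : ∀ a', a' ≤ K - 3 → m a' < m (K-1) := by
    intro a' ha'
    rcases Nat.lt_or_ge a' (K-3) with hgt | hle
    · exact lt_trans (hchain (K-3) a' (by omega) hgt (by omega)) h2
    · have : a' = K - 3 := by omega
      subst this; exact h2
  by_cases haK2 : a = K-2
  · subst haK2
    exfalso
    by_cases hb2 : b = K-2
    · subst hb2; simp at hab
    · by_cases hb1 : b = K-1
      · subst hb1; rw [if_pos rfl, if_neg (by omega), if_pos rfl] at hab; omega
      · rw [if_pos rfl, if_neg hb2, if_neg hb1] at hab; omega
  · by_cases haK1 : a = K-1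
    · subst haK1
      rw [if_neg (by omega), if_pos rfl] at hab
      by_cases hb2 : b = K-2
      · subst hb2; exact h1
      · exfalso
        by_cases hb1 : b = K-1
        · subst hb1; rw [if_neg (by omega), if_pos rfl] at hab; omega
        · rw [if_neg hb2, if_neg hb1] at hab; omega
    · have ha3 : a ≤ K - 3 := by omega
      rw [if_neg haK2, if_neg haK1] at hab
      by_cases hb2 : b = K-2
      · subst hb2
        exact lt_trans (hmK1 a ha3) h1
      · by_cases hb1 : b = K-1
        · subst hb1
          exact hmK1 a ha3
        · rw [if_neg hb2, if_neg hb1] at hab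
          exact hchain b a (by omega) hab (by omega)

lemma iso_three_le_k {V : Type} [Fintype V] {P : EOGraph V} {k : ℕ} {w : Fin k → ℝ}
    {hw : Function.Injective w} (iso : EOIsoTo (pathEO k w hw) P)
    (h2 : 2 ≤ P.graph.edgeSet.ncard) : 3 ≤ k := by
  obtain ⟨f, hadj, -⟩ := iso
  refine three_le_k P f.symm (fun a b => ?_) h2
  have := hadj (f.symm a) (f.symm b)
  simp only [Equiv.apply_symm_apply] at this
  exact this.symm

lemma contains_of_mono {V : Type} [Fintype V] (P : EOGraph V)
    (h2 : 2 ≤ P.graph.edgeSet.ncard) (h : IsMonotonePath P) :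
    ∃ C : ℕ, 0 < C ∧ ∀ (n : ℕ) (G : EOGraph (Fin n)),
      C * n < G.graph.edgeSet.ncard → EOContains G P := by
  obtain ⟨k, w, hw, hmono, iso⟩ := h
  have hk : 3 ≤ k := iso_three_le_k iso h2
  set K := k - 1 with hK
  refine ⟨(K+2)*(K+2), by positivity, ?_⟩
  intro n G hbig
  have hfin : G.graph.edgeSet.Finite := Set.toFinite _
  set E := hfin.toFinset with hE
  have hcard : E.card = G.graph.edgeSet.ncard := (Set.ncard_eq_toFinset_card _ hfin).symm
  have hdiag : ∀ e ∈ E, ¬ e.IsDiag := fun e he =>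
    SimpleGraph.not_isDiag_of_mem_edgeSet _ (hfin.mem_toFinset.mp he)
  have hinjL : ∀ e ∈ E, ∀ f ∈ E, G.label e = G.label f → e = f := fun e he f hf =>
    G.inj e (hfin.mem_toFinset.mp he) f (hfin.mem_toFinset.mp hf)
  obtain ⟨p, hpE, hplt, hpinj⟩ := Stmt9Aux.exists_inc_path (E := E) (L := G.label)
    hdiag hinjL (K := K) (by omega) rfl
    (by rw [hcard, ← mul_assoc]; exact hbig)
  have hpE' : ∀ i : ℕ, i + 1 < k → s(p i, p (i+1)) ∈ G.graph.edgeSet := fun i hi =>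
    hfin.mem_toFinset.mp (hpE i (by omega))
  have hchain : ∀ j i : ℕ, 0 ≤ i → i < j → j < K →
      G.label s(p i, p (i+1)) < G.label s(p j, p (j+1)) :=
    chain_lt (fun i _ hi => hplt i hi)
  rcases hmono with hsm | hsa
  · refine glue G P w hw iso p hpE'
      (fun i i' hi hi' hp => hpinj i i' (by omega) (by omega) hp) ?_
    intro i j hi hj hlt
    have hij : i < j := hsm.lt_iff_lt.mp hlt
    exact hchain (j:ℕ) (i:ℕ) (by omega) (Fin.lt_def.mp hij) (by omega)
  · set q : ℕ → Fin n := fun m => p (K - m) with hq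
    have hedge : ∀ m : ℕ, m + 1 < k → s(q m, q (m+1)) = s(p (K-1-m), p ((K-1-m)+1)) := by
      intro m hm
      show s(p (K - m), p (K - (m+1))) = _
      have e1 : K - m = (K-1-m) + 1 := by omega
      have e2 : K - (m+1) = K-1-m := by omega
      rw [e1, e2, Sym2.eq_swap]
    have hqE : ∀ i : ℕ, i + 1 < k → s(q i, q (i+1)) ∈ G.graph.edgeSet := by
      intro i hi
      rw [hedge i hi]
      exact hpE' (K-1-i) (by omega)
    refine glue G P w hw iso q hqE ?_ ?_
    · intro i i' hi hi' hpq
      have := hpinj (K - i) (K - i') (by omega) (by omega) hpq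
      omega
    · intro i j hi hj hlt
      have hij : j < i := hsa.lt_iff_gt.mp hlt
      rw [hedge (i:ℕ) hi, hedge (j:ℕ) hj]
      exact hchain (K-1-(j:ℕ)) (K-1-(i:ℕ)) (by omega)
        (by have := Fin.lt_def.mp hij; omega) (by omega)

lemma contains_of_flip {V : Type} [Fintype V] (P : EOGraph V)
    (h : IsFlippedPath P) :
    ∃ C : ℕ, 0 < C ∧ ∀ (n : ℕ) (G : EOGraph (Fin n)),
      C * n < G.graph.edgeSet.ncard → EOContains G P := by
  obtain ⟨k, hk4, w, hw, hcase⟩ := h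
  set K := k - 1 with hK
  refine ⟨(K+2)*(K+2), by positivity, ?_⟩
  intro n G hbig
  have hfin : G.graph.edgeSet.Finite := Set.toFinite _
  set E := hfin.toFinset with hE
  have hcard : E.card = G.graph.edgeSet.ncard := (Set.ncard_eq_toFinset_card _ hfin).symm
  have hdiag : ∀ e ∈ E, ¬ e.IsDiag := fun e he =>
    SimpleGraph.not_isDiag_of_mem_edgeSet _ (hfin.mem_toFinset.mp he)
  have hinjL : ∀ e ∈ E, ∀ f ∈ E, G.label e = G.label f → e = f := fun e he f hf =>
    G.inj e (hfin.mem_toFinset.mp he) f (hfin.mem_toFinset.mp hf)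
  rcases hcase with iso | iso
  · -- bottom flip
    obtain ⟨p, hpE, hP10, hP02, hplt, hpinj⟩ := Stmt9Aux.exists_flip_path (E := E)
      (L := G.label) hdiag hinjL (K := K) (by omega) rfl
      (by rw [hcard, ← mul_assoc]; exact hbig)
    have hpE' : ∀ i : ℕ, i + 1 < k → s(p i, p (i+1)) ∈ G.graph.edgeSet := fun i hi =>
      hfin.mem_toFinset.mp (hpE i (by omega))
    refine glue G P _ _ iso p hpE'
      (fun i i' hi hi' hp => hpinj i i' (by omega) (by omega) hp) ?_
    intro i j hi hj hlt
    have hsw : ∀ (m : Fin k), (((Equiv.swap (⟨0, by omega⟩ : Fin k) ⟨1, by omega⟩) m) : ℕ)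
        = if (m:ℕ) = 0 then 1 else if (m:ℕ) = 1 then 0 else (m:ℕ) := by
      intro m
      by_cases h0 : m = ⟨0, by omega⟩
      · subst h0; rw [Equiv.swap_apply_left]; simp
      · by_cases h1 : m = ⟨1, by omega⟩
        · subst h1; rw [Equiv.swap_apply_right]; simp
        · rw [Equiv.swap_apply_of_ne_of_ne h0 h1]
          have hv0 : (m:ℕ) ≠ 0 := fun hc => h0 (Fin.ext hc)
          have hv1 : (m:ℕ) ≠ 1 := fun hc => h1 (Fin.ext hc)
          rw [if_neg hv0, if_neg hv1]
    have hlt2 : w ((Equiv.swap (⟨0, by omega⟩ : Fin k) ⟨1, by omega⟩) i)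
        < w ((Equiv.swap (⟨0, by omega⟩ : Fin k) ⟨1, by omega⟩) j) := hlt
    have hlt3 := Fin.lt_def.mp ((hw.lt_iff_lt).mp hlt2)
    rw [hsw i, hsw j] at hlt3
    exact flip_bot_aux (by omega) (fun m => G.label s(p m, p (m+1))) hP10 hP02
      (fun i h1 h2 => hplt i h1 h2) (i:ℕ) (j:ℕ) (by omega) (by omega) hlt3
  · -- top flip
    obtain ⟨p, hpE, hP10, hP02, hplt, hpinj⟩ := Stmt9Aux.exists_flip_path (E := E)
      (L := fun e => - G.label e) hdiag
      (fun e he f hf hl => hinjL e he f hf (neg_inj.mp hl)) (K := K) (by omega) rfl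
      (by rw [hcard, ← mul_assoc]; exact hbig)
    have hpE' : ∀ i : ℕ, i + 1 < k → s(p i, p (i+1)) ∈ G.graph.edgeSet := fun i hi =>
      hfin.mem_toFinset.mp (hpE i (by omega))
    -- true-label facts (reversed)
    have hQ01 : G.label s(p 0, p 1) < G.label s(p 1, p 2) := by
      have := hP10; simpa using this
    have hQ20 : G.label s(p 2, p 3) < G.label s(p 0, p 1) := by
      have := hP02; simpa using this
    have hQdec : ∀ i, 2 ≤ i → i + 1 < K →
        G.label s(p (i+1), p (i+2)) < G.label s(p i, p (i+1)) := by
      intro i h1 h2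
      have := hplt i h1 h2; simpa using this
    set q : ℕ → Fin n := fun m => p (K - m) with hq
    have hedge : ∀ m : ℕ, m + 1 < k → s(q m, q (m+1)) = s(p (K-1-m), p ((K-1-m)+1)) := by
      intro m hm
      show s(p (K - m), p (K - (m+1))) = _
      have e1 : K - m = (K-1-m) + 1 := by omega
      have e2 : K - (m+1) = K-1-m := by omega
      rw [e1, e2, Sym2.eq_swap]
    have hqE : ∀ i : ℕ, i + 1 < k → s(q i, q (i+1)) ∈ G.graph.edgeSet := by
      intro i hi
      rw [hedge i hi]
      exact hpE' (K-1-i) (by omega)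
    refine glue G P _ _ iso q hqE ?_ ?_
    · intro i i' hi hi' hpq
      have := hpinj (K - i) (K - i') (by omega) (by omega) hpq
      omega
    · intro i j hi hj hlt
      have hne32 : (⟨k-3, by omega⟩ : Fin k) ≠ ⟨k-2, by omega⟩ := by
        intro hc
        have := congrArg Fin.val hc
        simp only at this
        omega
      have hsw : ∀ (m : Fin k), (((Equiv.swap (⟨k-3, by omega⟩ : Fin k) ⟨k-2, by omega⟩) m) : ℕ)
          = if (m:ℕ) = K-2 then K-1 else if (m:ℕ) = K-1 then K-2 else (m:ℕ) := by
        intro m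
        by_cases h0 : m = ⟨k-3, by omega⟩
        · subst h0; rw [Equiv.swap_apply_left]
          simp only
          rw [if_pos (by omega)]
          omega
        · by_cases h1 : m = ⟨k-2, by omega⟩
          · subst h1; rw [Equiv.swap_apply_right]
            simp only
            rw [if_neg (by omega), if_pos (by omega)]
            omega
          · rw [Equiv.swap_apply_of_ne_of_ne h0 h1]
            have hv0 : (m:ℕ) ≠ k-3 := fun hc => h0 (Fin.ext hc)
            have hv1 : (m:ℕ) ≠ k-2 := fun hc => h1 (Fin.ext hc)
            rw [if_neg (by omega), if_neg (by omega)]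
      have hlt2 : w ((Equiv.swap (⟨k-3, by omega⟩ : Fin k) ⟨k-2, by omega⟩) i)
          < w ((Equiv.swap (⟨k-3, by omega⟩ : Fin k) ⟨k-2, by omega⟩) j) := hlt
      have hlt3 := Fin.lt_def.mp ((hw.lt_iff_lt).mp hlt2)
      rw [hsw i, hsw j] at hlt3
      rw [hedge (i:ℕ) hi, hedge (j:ℕ) hj]
      have hmain := flip_top_aux (K := K) (by omega)
        (fun m => G.label s(p (K-1-m), p ((K-1-m)+1))) ?_ ?_ ?_ (i:ℕ) (j:ℕ)
        (by omega) (by omega) hlt3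
      · exact hmain
      · show G.label s(p (K-1-(K-1)), p ((K-1-(K-1))+1)) < G.label s(p (K-1-(K-2)), p ((K-1-(K-2))+1))
        have e1 : K-1-(K-1) = 0 := by omega
        have e2 : K-1-(K-2) = 1 := by omega
        rw [e1, e2]
        exact hQ01
      · show G.label s(p (K-1-(K-3)), p ((K-1-(K-3))+1)) < G.label s(p (K-1-(K-1)), p ((K-1-(K-1))+1))
        have e1 : K-1-(K-3) = 2 := by omega
        have e2 : K-1-(K-1) = 0 := by omega
        rw [e1, e2]
        exact hQ20
      · intro i hi
        show G.label s(p (K-1-i), p ((K-1-i)+1)) < G.label s(p (K-1-(i+1)), p ((K-1-(i+1))+1))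
        have e1 : K-1-i = (K-2-i)+1 := by omega
        have e2 : K-1-(i+1) = K-2-i := by omega
        have e3 : (K-2-i)+1+1 = (K-2-i)+2 := by omega
        rw [e1, e2, e3]
        exact hQdec (K-2-i) (by omega) (by omega)

end Stmt9Glue

/-- If an edge-ordered path `P` with at least two edges is monotone or flipped,
then `ex_<(n, P) = Θ(n)`. -/
theorem stmt_9 {V : Type} [Fintype V] (P : EOGraph V) (hpath : IsPathEO P)
    (h2 : 2 ≤ P.graph.edgeSet.ncard) (h : IsMonotonePath P ∨ IsFlippedPath P) :
    ∃ c C : ℝ, 0 < c ∧ 0 < C ∧ ∃ N : ℕ, ∀ n : ℕ, N ≤ n →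
      c * n ≤ (exLT n P : ℝ) ∧ (exLT n P : ℝ) ≤ C * n := by
  have hC : ∃ C : ℕ, 0 < C ∧ ∀ (n : ℕ) (G : EOGraph (Fin n)),
      C * n < G.graph.edgeSet.ncard → EOContains G P := by
    rcases h with hm | hf
    · exact Stmt9Glue.contains_of_mono P h2 hm
    · exact Stmt9Glue.contains_of_flip P hf
  obtain ⟨Cn, hCpos, hCmain⟩ := hC
  refine ⟨1/4, Cn, by norm_num, by exact_mod_cast hCpos, 2, ?_⟩
  intro n hn
  set S : Set ℕ := {m | ∃ G : EOGraph (Fin n),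
    ¬ EOContains G P ∧ G.graph.edgeSet.ncard = m} with hS
  have hEq : exLT n P = sSup S := rfl
  have hm0 : (Stmt9Glue.matchEO n).graph.edgeSet.ncard ∈ S :=
    ⟨Stmt9Glue.matchEO n, Stmt9Glue.matchEO_avoid P hpath h2 n, rfl⟩
  have hub : ∀ m ∈ S, m ≤ Cn * n := by
    rintro m ⟨G, hav, rfl⟩
    by_contra hc
    push_neg at hc
    exact hav (hCmain n G hc)
  have hbdd : BddAbove S := ⟨Cn * n, fun m hm => hub m hm⟩
  have hexup : exLT n P ≤ Cn * n := by
    rw [hEq]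
    exact csSup_le ⟨_, hm0⟩ hub
  have hexlo : n / 2 ≤ exLT n P := by
    rw [hEq]
    exact le_trans (Stmt9Glue.matchEO_card n) (le_csSup hbdd hm0)
  constructor
  · have h4 : n ≤ 4 * (n/2) := by omega
    have h5 : (n:ℝ) ≤ 4 * ((n/2 : ℕ) : ℝ) := by exact_mod_cast h4
    have h6 : ((n/2:ℕ):ℝ) ≤ (exLT n P : ℝ) := by exact_mod_cast hexlo
    linarith
  · have h7 : (exLT n P : ℝ) ≤ ((Cn * n : ℕ) : ℝ) := by exact_mod_cast hexup
    rw [Nat.cast_mul] at h7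
    exact h7
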